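/- For a geodesic ray b in a proper CAT(0) space, the four κ-slim conditions are pairwise equivalent: b satisfies κ-slim condition 1 if and only if it satisfies κ-slim condition 2, if and only if it satisfies κ-slim condition 3, if and only if it satisfies κ-slim condition 4. -/

import Mathlib

open Set Metric Filter ENNReal

noncomputable section

/-- The set of points lying on a geodesic from `x` to `y`; in a uniquely geodesic space
(such as a CAT(0) space) this is the geodesic segment `[x,y]`. -/
def seg {X : Type*} [MetricSpace X] (x y : X) : Set X :=
  {z | dist x z + dist z y = dist x y}

/-- `X` is a geodesic metric space. -/
def GeodesicSpace (X : Type*) [MetricSpace X] : Prop :=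
  ∀ x y : X, ∃ γ : ℝ → X, γ 0 = x ∧ γ (dist x y) = y ∧
    ∀ s ∈ Icc (0:ℝ) (dist x y), ∀ t ∈ Icc (0:ℝ) (dist x y), dist (γ s) (γ t) = |s - t|

/-- `X` is a CAT(0) space: a geodesic metric space satisfying the CN (Bruhat–Tits)
inequality (comparison of triangles with Euclidean ones). -/
def IsCAT0 (X : Type*) [MetricSpace X] : Prop :=
  GeodesicSpace X ∧ ∀ x y z m : X, dist y m = dist y z / 2 → dist m z = dist y z / 2 →
    dist x m ^ 2 ≤ (dist x y ^ 2 + dist x z ^ 2) / 2 - dist y z ^ 2 / 4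

/-- `b` restricted to `[0,∞)` is a geodesic ray (an isometric embedding of `[0,∞)`). -/
def IsGeodesicRay {X : Type*} [MetricSpace X] (b : ℝ → X) : Prop :=
  ∀ s t : ℝ, 0 ≤ s → 0 ≤ t → dist (b s) (b t) = |s - t|

/-- The image of the geodesic ray `b`. -/
def rayIm {X : Type*} [MetricSpace X] (b : ℝ → X) : Set X := b '' Ici 0

/-- `κ` is a sublinear function: monotone increasing, concave, `≥ 1`, with `κ(t)/t → 0`. -/
structure IsSublinearFn (κ : ℝ → ℝ) : Prop where
  one_le : ∀ t : ℝ, 1 ≤ κ t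
  mono : Monotone κ
  concave : ConcaveOn ℝ (Ici 0) κ
  sublinear : Tendsto (fun t => κ t / t) atTop (nhds 0)

/-- `π` is the nearest-point projection onto the geodesic ray `b`:
`π x` lies on `b` and realizes the distance from `x` to `b`. -/
def IsProj {X : Type*} [MetricSpace X] (b : ℝ → X) (π : X → X) : Prop :=
  ∀ x : X, π x ∈ rayIm b ∧ dist x (π x) = infDist x (rayIm b)

/-- The geodesic ray `b` (with projection `π`) is `κ`-contracting: there is `c ≥ 0` such
that whenever `d(x,y) ≤ d(x,b)` we have `d(x_b, y_b) ≤ c·κ(‖x‖)`. -/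
def KappaContracting {X : Type*} [MetricSpace X] (κ : ℝ → ℝ) (o : X) (b : ℝ → X)
    (π : X → X) : Prop :=
  ∃ c ≥ (0:ℝ), ∀ x y : X, dist x y ≤ infDist x (rayIm b) →
    dist (π x) (π y) ≤ c * κ (dist o x)

/-- `b` is `κ`-contracting with contracting constant `c` (projection form, Lemma 2.6):
whenever `d(x,y) < d(x,b)` we have `d(x_b, y_b) ≤ c·κ(‖x_b‖)`. -/
def KappaContractingWith {X : Type*} [MetricSpace X] (κ : ℝ → ℝ) (o : X) (b : ℝ → X)
    (π : X → X) (c : ℝ) : Prop :=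
  0 ≤ c ∧ ∀ x y : X, dist x y < infDist x (rayIm b) →
    dist (π x) (π y) ≤ c * κ (dist o (π x))

/-- κ-slim condition 1: `d(x_b, [x,y]) ≤ c·κ(‖x_b‖)` for all `x ∈ X`, `y ∈ im(b)`. -/
def SlimCond1 {X : Type*} [MetricSpace X] (κ : ℝ → ℝ) (o : X) (b : ℝ → X) (π : X → X) : Prop :=
  ∃ c ≥ (0:ℝ), ∀ x : X, ∀ y ∈ rayIm b, infDist (π x) (seg x y) ≤ c * κ (dist o (π x))

/-- κ-slim condition 2: `d(x_b, [x,y]) ≤ c·κ(‖z‖)` for some `z` on `b` between `x_b` and `y`. -/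
def SlimCond2 {X : Type*} [MetricSpace X] (κ : ℝ → ℝ) (o : X) (b : ℝ → X) (π : X → X) : Prop :=
  ∃ c ≥ (0:ℝ), ∀ x : X, ∀ y ∈ rayIm b, ∃ z ∈ rayIm b ∩ seg (π x) y,
    infDist (π x) (seg x y) ≤ c * κ (dist o z)

/-- κ-slim condition 3: for `x y z` with `[y,z] ⊆ im(b)` and `w ∈ [y,z]`,
`d(w, [y,x] ∪ [x,z]) ≤ c·κ(‖x_b‖)`. -/
def SlimCond3 {X : Type*} [MetricSpace X] (κ : ℝ → ℝ) (o : X) (b : ℝ → X) (π : X → X) : Prop :=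
  ∃ c ≥ (0:ℝ), ∀ x y z : X, seg y z ⊆ rayIm b →
    ∀ w ∈ seg y z, infDist w (seg y x ∪ seg x z) ≤ c * κ (dist o (π x))

/-- κ-slim condition 4: for `x ∈ X` and `[y,z] ⊆ im(b)` with `‖y‖ ≤ ‖x_b‖ ≤ ‖z‖` and
`w ∈ [y,z]`, `d(w, [y,x] ∪ [x,z]) ≤ c·κ(‖z‖)`. -/
def SlimCond4 {X : Type*} [MetricSpace X] (κ : ℝ → ℝ) (o : X) (b : ℝ → X) (π : X → X) : Prop :=
  ∃ c ≥ (0:ℝ), ∀ x y z : X, seg y z ⊆ rayIm b →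
    dist o y ≤ dist o (π x) → dist o (π x) ≤ dist o z →
    ∀ w ∈ seg y z, infDist w (seg y x ∪ seg x z) ≤ c * κ (dist o z)

section Helpers

variable {X : Type*} [MetricSpace X]

lemma left_mem_seg (x y : X) : x ∈ seg x y := by
  simp [seg]

lemma right_mem_seg (x y : X) : y ∈ seg x y := by
  simp [seg]

lemma seg_comm (x y : X) : seg x y = seg y x := by
  ext p
  simp only [seg, Set.mem_setOf_eq]
  constructor <;> intro h <;>
    · rw [dist_comm x y] at * <;> rw [dist_comm y x] at *
      rw [dist_comm p x] at * <;> rw [dist_comm p y] at * <;> linarith [h]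

lemma seg_nonempty (x y : X) : (seg x y).Nonempty := ⟨x, left_mem_seg x y⟩

/-- transitivity of betweenness: if `p ∈ [x,y]` and `q ∈ [x,p]` then `q ∈ [x,y]`. -/
lemma seg_trans {x y p q : X} (hp : p ∈ seg x y) (hq : q ∈ seg x p) : q ∈ seg x y := by
  simp only [seg, Set.mem_setOf_eq] at *
  have t1 : dist q y ≤ dist q p + dist p y := dist_triangle q p y
  have t2 : dist x y ≤ dist x q + dist q y := dist_triangle x q y
  linarith

lemma seg_dist_le {x y p : X} (hp : p ∈ seg x y) : dist x p ≤ dist x y := by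
  simp only [seg, Set.mem_setOf_eq] at hp
  have := dist_nonneg (x := p) (y := y)
  linarith

end Helpers
section Helpers2

variable {X : Type*} [MetricSpace X]

/-- In a geodesic space, for every `r ∈ [0, d(x,y)]` there is a point of `seg x y`
at distance `r` from `x`. -/
lemma exists_seg_point (hG : GeodesicSpace X) (x y : X) {r : ℝ} (h0 : 0 ≤ r)
    (h1 : r ≤ dist x y) : ∃ p ∈ seg x y, dist x p = r ∧ dist p y = dist x y - r := by
  obtain ⟨γ, hγ0, hγd, hiso⟩ := hG x y
  have hd : 0 ≤ dist x y := dist_nonneg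
  have h0m : (0:ℝ) ∈ Set.Icc (0:ℝ) (dist x y) := ⟨le_refl _, hd⟩
  have hrm : r ∈ Set.Icc (0:ℝ) (dist x y) := ⟨h0, h1⟩
  have hdm : dist x y ∈ Set.Icc (0:ℝ) (dist x y) := ⟨hd, le_refl _⟩
  refine ⟨γ r, ?_, ?_, ?_⟩
  · have e1 : dist x (γ r) = r := by
      have := hiso 0 h0m r hrm
      rw [hγ0] at this
      rw [this]; rw [abs_of_nonpos (by linarith)]; ring
    have e2 : dist (γ r) y = dist x y - r := by
      have := hiso r hrm (dist x y) hdm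
      rw [hγd] at this
      rw [this, abs_of_nonpos (by linarith)]; ring
    simp only [seg, Set.mem_setOf_eq]
    rw [e1, e2]; ring
  · have := hiso 0 h0m r hrm
    rw [hγ0] at this
    rw [this, abs_of_nonpos (by linarith)]; ring
  · have := hiso r hrm (dist x y) hdm
    rw [hγd] at this
    rw [this, abs_of_nonpos (by linarith)]; ring

/-- midpoint existence -/
lemma exists_midpoint (hG : GeodesicSpace X) (x y : X) :
    ∃ m : X, dist x m = dist x y / 2 ∧ dist m y = dist x y / 2 := by
  obtain ⟨p, _, hp1, hp2⟩ := exists_seg_point hG x y (r := dist x y / 2)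
    (by positivity) (by linarith [dist_nonneg (x := x) (y := y)])
  exact ⟨p, hp1, by rw [hp2]; ring⟩

/-- Uniqueness of between-points in a CAT(0) space: two points of `seg y z` at the
same distance from `y` coincide. -/
lemma seg_unique (hX : IsCAT0 X) {y z p q : X} (hp : p ∈ seg y z) (hq : q ∈ seg y z)
    (h : dist y p = dist y q) : p = q := by
  obtain ⟨hG, hCN⟩ := hX
  obtain ⟨m, hm1, hm2⟩ := exists_midpoint hG p q
  simp only [seg, Set.mem_setOf_eq] at hp hq
  have h' : dist p z = dist q z := by linarith
  have c1 := hCN y p q m hm1 hm2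
  have c2 := hCN z p q m hm1 hm2
  have t : dist y z ≤ dist y m + dist m z := dist_triangle y m z
  have hA0 : 0 ≤ dist y p := dist_nonneg
  have hB0 : 0 ≤ dist p z := dist_nonneg
  have hP0 : 0 ≤ dist y m := dist_nonneg
  have hQ0 : 0 ≤ dist m z := dist_nonneg
  have he0 : 0 ≤ dist p q := dist_nonneg
  have c1' : dist y m ^ 2 ≤ dist y p ^ 2 - dist p q ^ 2 / 4 := by
    rw [← h] at c1; linarith
  have e1 : dist z m = dist m z := dist_comm z m
  have e2 : dist z p = dist p z := dist_comm z p
  have e3 : dist z q = dist q z := dist_comm z q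
  have c2' : dist m z ^ 2 ≤ dist p z ^ 2 - dist p q ^ 2 / 4 := by
    rw [e1, e2, e3, ← h'] at c2; linarith
  have h1 : dist y m ≤ dist y p := by nlinarith [sq_nonneg (dist p q)]
  have h2 : dist m z ≤ dist p z := by nlinarith [sq_nonneg (dist p q)]
  have hPA : dist y m = dist y p := by linarith [hp, t]
  rw [hPA] at c1'
  have h4 : dist p q ^ 2 = 0 := le_antisymm (by linarith) (sq_nonneg _)
  have h5 : dist p q = 0 := by
    exact pow_eq_zero_iff (two_ne_zero) |>.mp h4
  exact dist_eq_zero.mp h5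
end Helpers2
section Helpers3

variable {X : Type*} [MetricSpace X]

lemma ray_dist {b : ℝ → X} (hb : IsGeodesicRay b) {s t : ℝ} (hs : 0 ≤ s) (ht : 0 ≤ t) :
    dist (b s) (b t) = |s - t| := hb s t hs ht

lemma ray_dist_o {o : X} {b : ℝ → X} (hb : IsGeodesicRay b) (hb0 : b 0 = o) {s : ℝ}
    (hs : 0 ≤ s) : dist o (b s) = s := by
  rw [← hb0, ray_dist hb le_rfl hs, abs_of_nonpos (by linarith)]; ring

lemma mem_rayIm {b : ℝ → X} {s : ℝ} (hs : 0 ≤ s) : b s ∈ rayIm b :=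
  ⟨s, hs, rfl⟩

/-- every point of the ray image is `b (dist o ·)`. -/
lemma rayIm_eq {o : X} {b : ℝ → X} (hb : IsGeodesicRay b) (hb0 : b 0 = o) {y : X}
    (hy : y ∈ rayIm b) : y = b (dist o y) ∧ 0 ≤ dist o y := by
  obtain ⟨s, hs, rfl⟩ := hy
  rw [ray_dist_o hb hb0 hs]
  exact ⟨rfl, hs⟩

lemma proj_eq {o : X} {b : ℝ → X} (hb : IsGeodesicRay b) (hb0 : b 0 = o)
    {π : X → X} (hπ : IsProj b π) (x : X) :
    π x = b (dist o (π x)) ∧ 0 ≤ dist o (π x) :=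
  rayIm_eq hb hb0 (hπ x).1

/-- betweenness on the ray. -/
lemma ray_seg_mem {b : ℝ → X} (hb : IsGeodesicRay b) {s t r : ℝ} (hs : 0 ≤ s) (ht : 0 ≤ t)
    (hr1 : s ≤ r) (hr2 : r ≤ t) : b r ∈ seg (b s) (b t) := by
  have hr : 0 ≤ r := le_trans hs hr1
  simp only [seg, Set.mem_setOf_eq]
  rw [ray_dist hb hs hr, ray_dist hb hr ht, ray_dist hb hs ht,
    abs_of_nonpos (by linarith), abs_of_nonpos (by linarith), abs_of_nonpos (by linarith)]
  ring

/-- segments between ray points lie on the ray, with the matching parameter. -/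
lemma ray_seg_sub (hX : IsCAT0 X) {b : ℝ → X} (hb : IsGeodesicRay b) {s t : ℝ}
    (hs : 0 ≤ s) (hst : s ≤ t) {p : X} (hp : p ∈ seg (b s) (b t)) :
    p = b (s + dist (b s) p) := by
  have ht : 0 ≤ t := le_trans hs hst
  have hd : dist (b s) p ≤ dist (b s) (b t) := seg_dist_le hp
  have hdt : dist (b s) (b t) = t - s := by
    rw [ray_dist hb hs ht, abs_of_nonpos (by linarith)]; ring
  have h1 : s + dist (b s) p ≤ t := by rw [hdt] at hd; linarith
  have h0 : 0 ≤ dist (b s) p := dist_nonneg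
  have hq : b (s + dist (b s) p) ∈ seg (b s) (b t) :=
    ray_seg_mem hb hs ht (by linarith) h1
  have : dist (b s) (b (s + dist (b s) p)) = dist (b s) p := by
    rw [ray_dist hb hs (by linarith), abs_of_nonpos (by linarith)]; ring
  exact seg_unique hX hp hq this.symm

/-- parameter of a point between two ray points is between the parameters. -/
lemma ray_seg_param {o : X} {b : ℝ → X} (hb : IsGeodesicRay b) (hb0 : b 0 = o)
    {s t r : ℝ} (hs : 0 ≤ s) (ht : 0 ≤ t) (hr : 0 ≤ r)
    (hmem : b r ∈ seg (b s) (b t)) : (s ≤ r ∧ r ≤ t) ∨ (t ≤ r ∧ r ≤ s) := by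
  simp only [seg, Set.mem_setOf_eq] at hmem
  rw [ray_dist hb hs hr, ray_dist hb hr ht, ray_dist hb hs ht] at hmem
  rcases abs_cases (s - r) with ⟨e1, _⟩ | ⟨e1, _⟩ <;>
    rcases abs_cases (r - t) with ⟨e2, _⟩ | ⟨e2, _⟩ <;>
      rcases abs_cases (s - t) with ⟨e3, _⟩ | ⟨e3, _⟩ <;>
        rw [e1, e2, e3] at hmem <;>
          first
            | (left; constructor <;> linarith)
            | (right; constructor <;> linarith)

end Helpers3
section Helpers4

variable {X : Type*} [MetricSpace X]

/-- Midpoint contraction for two geodesics with a common endpoint. -/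
lemma mid_contract (hX : IsCAT0 X) {a y y' mb mc : X}
    (h1 : dist a mb = dist a y / 2) (h2 : dist mb y = dist a y / 2)
    (h3 : dist a mc = dist a y' / 2) (h4 : dist mc y' = dist a y' / 2) :
    dist mb mc ≤ dist y y' / 2 := by
  have c1 := hX.2 mb a y' mc h3 h4
  have c2 := hX.2 y' a y mb h1 h2
  rw [dist_comm mb a, h1] at c1
  rw [dist_comm y' a, dist_comm y' y] at c2
  rw [dist_comm mb y'] at c1
  nlinarith [dist_nonneg (x := mb) (y := mc), dist_nonneg (x := y) (y := y'), c1, c2]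

/-- Midpoint contraction for two pairs. -/
lemma mid_contract2 (hX : IsCAT0 X) {p q p' q' m1 m2 : X}
    (h1 : dist p m1 = dist p q / 2) (h2 : dist m1 q = dist p q / 2)
    (h3 : dist p' m2 = dist p' q' / 2) (h4 : dist m2 q' = dist p' q' / 2) :
    dist m1 m2 ≤ (dist p p' + dist q q') / 2 := by
  obtain ⟨m3, hm31, hm32⟩ := exists_midpoint hX.1 p q'
  have A : dist m1 m3 ≤ dist q q' / 2 := mid_contract hX h1 h2 hm31 hm32
  have B : dist m3 m2 ≤ dist p p' / 2 := by
    have b1 : dist q' m3 = dist q' p / 2 := by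
      rw [dist_comm q' m3, dist_comm q' p]; exact hm32
    have b2 : dist m3 p = dist q' p / 2 := by
      rw [dist_comm m3 p, dist_comm q' p]; exact hm31
    have b3 : dist q' m2 = dist q' p' / 2 := by
      rw [dist_comm q' m2, dist_comm q' p']; exact h4
    have b4 : dist m2 p' = dist q' p' / 2 := by
      rw [dist_comm m2 p', dist_comm q' p']; exact h3
    exact mid_contract hX b1 b2 b3 b4
  calc dist m1 m2 ≤ dist m1 m3 + dist m3 m2 := dist_triangle _ _ _
    _ ≤ (dist p p' + dist q q') / 2 := by linarith

/-- Convexity of the metric in a CAT(0) space: for geodesics from a common point `a`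
to `y` and `y'`, points at parameter fraction `θ` are at distance `≤ θ·d(y,y')`. -/
lemma conv_interp (hX : IsCAT0 X) {a y y' p q : X} {θ : ℝ} (hθ0 : 0 ≤ θ) (hθ1 : θ ≤ 1)
    (hp : p ∈ seg a y) (hq : q ∈ seg a y')
    (hdp : dist a p = θ * dist a y) (hdq : dist a q = θ * dist a y') :
    dist p q ≤ θ * dist y y' := by
  obtain ⟨γ, hγ0, hγd, hiso⟩ := hX.1 a y
  obtain ⟨γ', hγ0', hγd', hiso'⟩ := hX.1 a y'
  set D := dist a y with hD
  set D' := dist a y' with hD'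
  have hD0 : 0 ≤ D := dist_nonneg
  have hD0' : 0 ≤ D' := dist_nonneg
  -- distance formulas along γ, γ'
  have dγ : ∀ r r' : ℝ, 0 ≤ r → r ≤ 1 → 0 ≤ r' → r' ≤ 1 →
      dist (γ (r * D)) (γ (r' * D)) = |r - r'| * D := by
    intro r r' h0 h11 h0' h1'
    have := hiso (r * D) ⟨by positivity, by nlinarith⟩ (r' * D) ⟨by positivity, by nlinarith⟩
    rw [this, ← sub_mul, abs_mul, abs_of_nonneg hD0]
  have dγ' : ∀ r r' : ℝ, 0 ≤ r → r ≤ 1 → 0 ≤ r' → r' ≤ 1 →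
      dist (γ' (r * D')) (γ' (r' * D')) = |r - r'| * D' := by
    intro r r' h0 h11 h0' h1'
    have := hiso' (r * D') ⟨by positivity, by nlinarith⟩ (r' * D') ⟨by positivity, by nlinarith⟩
    rw [this, ← sub_mul, abs_mul, abs_of_nonneg hD0']
  set g : ℝ → ℝ := fun r => dist (γ (r * D)) (γ' (r * D')) with hg
  have hg0 : g 0 = 0 := by
    simp only [hg, zero_mul]
    rw [hγ0, hγ0']; exact dist_self a
  -- midpoint convexity of g
  have hmid : ∀ r r' : ℝ, 0 ≤ r → r ≤ 1 → 0 ≤ r' → r' ≤ 1 →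
      g ((r + r') / 2) ≤ (g r + g r') / 2 := by
    intro r r' h0 h11 h0' h1'
    have hm0 : 0 ≤ (r + r') / 2 := by linarith
    have hm1 : (r + r') / 2 ≤ 1 := by linarith
    have m1a : dist (γ (r * D)) (γ (((r + r') / 2) * D)) = dist (γ (r * D)) (γ (r' * D)) / 2 := by
      rw [dγ r ((r + r') / 2) h0 h11 hm0 hm1, dγ r r' h0 h11 h0' h1']
      rw [show r - (r + r') / 2 = (r - r') / 2 by ring, abs_div]
      simp [abs_of_nonneg]; ring
    have m1b : dist (γ (((r + r') / 2) * D)) (γ (r' * D)) = dist (γ (r * D)) (γ (r' * D)) / 2 := by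
      rw [dγ ((r + r') / 2) r' hm0 hm1 h0' h1', dγ r r' h0 h11 h0' h1']
      rw [show (r + r') / 2 - r' = (r - r') / 2 by ring, abs_div]
      simp [abs_of_nonneg]; ring
    have m2a : dist (γ' (r * D')) (γ' (((r + r') / 2) * D')) =
        dist (γ' (r * D')) (γ' (r' * D')) / 2 := by
      rw [dγ' r ((r + r') / 2) h0 h11 hm0 hm1, dγ' r r' h0 h11 h0' h1']
      rw [show r - (r + r') / 2 = (r - r') / 2 by ring, abs_div]
      simp [abs_of_nonneg]; ring
    have m2b : dist (γ' (((r + r') / 2) * D')) (γ' (r' * D')) =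
        dist (γ' (r * D')) (γ' (r' * D')) / 2 := by
      rw [dγ' ((r + r') / 2) r' hm0 hm1 h0' h1', dγ' r r' h0 h11 h0' h1']
      rw [show (r + r') / 2 - r' = (r - r') / 2 by ring, abs_div]
      simp [abs_of_nonneg]; ring
    exact mid_contract2 hX m1a m1b m2a m2b
  -- the bound by doubling induction
  have hbound : ∀ r : ℝ, 0 ≤ r → r ≤ 1 → g r ≤ D + D' + 1 := by
    intro r h0 h11
    have t1 : dist (γ (r * D)) a ≤ r * D := by
      rw [dist_comm, ← hγ0, show γ (r*D) = γ (r*D) from rfl]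
      have := dγ 0 r le_rfl zero_le_one h0 h11
      rw [zero_mul] at this
      rw [this, abs_of_nonpos (by linarith)]
      nlinarith
    have t2 : dist a (γ' (r * D')) ≤ r * D' := by
      rw [← hγ0']
      have := dγ' 0 r le_rfl zero_le_one h0 h11
      rw [zero_mul] at this
      rw [this, abs_of_nonpos (by linarith)]
      nlinarith
    calc g r ≤ dist (γ (r * D)) a + dist a (γ' (r * D')) := dist_triangle _ _ _
      _ ≤ r * D + r * D' := by linarith
      _ ≤ D + D' + 1 := by nlinarith
  have hind : ∀ n : ℕ, ∀ r : ℝ, 0 ≤ r → r ≤ 1 →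
      g r ≤ r * g 1 + (D + D' + 1) * (1 / 2) ^ n := by
    intro n
    induction n with
    | zero =>
      intro r h0 h11
      have := hbound r h0 h11
      have hg1 : 0 ≤ g 1 := dist_nonneg
      have : 0 ≤ r * g 1 := by positivity
      simpa using by nlinarith [hbound r h0 h11]
    | succ n ih =>
      intro r h0 h11
      rcases le_or_gt r (1/2) with hr | hr
      · have e : r = (0 + 2 * r) / 2 := by ring
        have h2r0 : 0 ≤ 2 * r := by linarith
        have h2r1 : 2 * r ≤ 1 := by linarith
        calc g r = g ((0 + 2 * r) / 2) := by rw [← e]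
          _ ≤ (g 0 + g (2 * r)) / 2 := hmid 0 (2 * r) le_rfl zero_le_one h2r0 h2r1
          _ ≤ (0 + (2 * r * g 1 + (D + D' + 1) * (1 / 2) ^ n)) / 2 := by
              have := ih (2 * r) h2r0 h2r1
              rw [hg0]; linarith
          _ = r * g 1 + (D + D' + 1) * (1 / 2) ^ (n + 1) := by ring
      · have e : r = ((2 * r - 1) + 1) / 2 := by ring
        have h2r0 : 0 ≤ 2 * r - 1 := by linarith
        have h2r1 : 2 * r - 1 ≤ 1 := by linarith
        calc g r = g (((2 * r - 1) + 1) / 2) := by rw [← e]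
          _ ≤ (g (2 * r - 1) + g 1) / 2 := hmid (2 * r - 1) 1 h2r0 h2r1 zero_le_one le_rfl
          _ ≤ (((2 * r - 1) * g 1 + (D + D' + 1) * (1 / 2) ^ n) + g 1) / 2 := by
              have := ih (2 * r - 1) h2r0 h2r1
              linarith
          _ = r * g 1 + (D + D' + 1) * (1 / 2) ^ (n + 1) := by ring
  have hfinal : g θ ≤ θ * g 1 := by
    have hK : (0:ℝ) < D + D' + 1 := by linarith
    refine le_of_forall_pos_le_add ?_
    intro ε hε
    obtain ⟨n, hn⟩ := exists_pow_lt_of_lt_one (div_pos hε hK) (by norm_num : (1:ℝ)/2 < 1)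
    have := hind n θ hθ0 hθ1
    have : (D + D' + 1) * (1 / 2) ^ n < ε := by
      rw [← lt_div_iff₀' hK]; exact hn
    linarith [hind n θ hθ0 hθ1]
  -- identify p and q with the geodesic points
  have hpm : p = γ (θ * D) := by
    have hmem : γ (θ * D) ∈ seg a y ∧ dist a (γ (θ * D)) = θ * D := by
      constructor
      · simp only [seg, Set.mem_setOf_eq]
        have e1 : dist a (γ (θ * D)) = θ * D := by
          rw [← hγ0]
          have := dγ 0 θ le_rfl zero_le_one hθ0 hθ1
          rw [zero_mul] at this
          rw [this, abs_of_nonpos (by linarith)]; ring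
        have e2 : dist (γ (θ * D)) y = D - θ * D := by
          rw [← hγd]
          have := dγ θ 1 hθ0 hθ1 zero_le_one le_rfl
          rw [one_mul] at this
          rw [this, abs_of_nonpos (by nlinarith)]; ring
        rw [e1, e2, ← hD]; ring
      · rw [← hγ0]
        have := dγ 0 θ le_rfl zero_le_one hθ0 hθ1
        rw [zero_mul] at this
        rw [this, abs_of_nonpos (by linarith)]; ring
    exact seg_unique hX hp hmem.1 (by rw [hdp, hmem.2])
  have hqm : q = γ' (θ * D') := by
    have hmem : γ' (θ * D') ∈ seg a y' ∧ dist a (γ' (θ * D')) = θ * D' := by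
      constructor
      · simp only [seg, Set.mem_setOf_eq]
        have e1 : dist a (γ' (θ * D')) = θ * D' := by
          rw [← hγ0']
          have := dγ' 0 θ le_rfl zero_le_one hθ0 hθ1
          rw [zero_mul] at this
          rw [this, abs_of_nonpos (by linarith)]; ring
        have e2 : dist (γ' (θ * D')) y' = D' - θ * D' := by
          rw [← hγd']
          have := dγ' θ 1 hθ0 hθ1 zero_le_one le_rfl
          rw [one_mul] at this
          rw [this, abs_of_nonpos (by nlinarith)]; ring
        rw [e1, e2, ← hD']; ring
      · rw [← hγ0']
        have := dγ' 0 θ le_rfl zero_le_one hθ0 hθ1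
        rw [zero_mul] at this
        rw [this, abs_of_nonpos (by linarith)]; ring
    exact seg_unique hX hq hmem.1 (by rw [hdq, hmem.2])
  have hg1y : g 1 = dist y y' := by
    simp only [hg, one_mul, ← hD, ← hD']
    rw [hγd, hγd']
  rw [hpm, hqm]
  have : g θ ≤ θ * g 1 := hfinal
  rw [hg1y] at this
  exact this

end Helpers4
section Helpers5

variable {X : Type*} [MetricSpace X]

/-- CAT(0) Pythagorean inequality w.r.t. nearest-point projection to the ray. -/
lemma pyth (hX : IsCAT0 X) {o : X} {b : ℝ → X} (hb : IsGeodesicRay b) (hb0 : b 0 = o)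
    {π : X → X} (hπ : IsProj b π) (a : X) {s : ℝ} (hs : 0 ≤ s) :
    dist a (π a) ^ 2 + (s - dist o (π a)) ^ 2 ≤ dist a (b s) ^ 2 := by
  obtain ⟨hπa, hu0⟩ := proj_eq hb hb0 hπ a
  set u := dist o (π a) with hu
  have hmin : ∀ σ : ℝ, 0 ≤ σ → dist a (π a) ≤ dist a (b σ) := by
    intro σ hσ
    rw [(hπ a).2]
    exact Metric.infDist_le_dist_of_mem (mem_rayIm hσ)
  have hCNmid : ∀ σ₁ σ₂ : ℝ, 0 ≤ σ₁ → 0 ≤ σ₂ →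
      dist a (b ((σ₁ + σ₂) / 2)) ^ 2 ≤
        (dist a (b σ₁) ^ 2 + dist a (b σ₂) ^ 2) / 2 - (σ₁ - σ₂) ^ 2 / 4 := by
    intro σ₁ σ₂ h1 h2
    have hm : 0 ≤ (σ₁ + σ₂) / 2 := by linarith
    have d1 : dist (b σ₁) (b ((σ₁ + σ₂) / 2)) = dist (b σ₁) (b σ₂) / 2 := by
      rw [ray_dist hb h1 hm, ray_dist hb h1 h2]
      rw [show σ₁ - (σ₁ + σ₂)/2 = (σ₁ - σ₂)/2 by ring, abs_div]
      simp [abs_of_nonneg]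
    have d2 : dist (b ((σ₁ + σ₂) / 2)) (b σ₂) = dist (b σ₁) (b σ₂) / 2 := by
      rw [ray_dist hb hm h2, ray_dist hb h1 h2]
      rw [show (σ₁ + σ₂)/2 - σ₂ = (σ₁ - σ₂)/2 by ring, abs_div]
      simp [abs_of_nonneg]
    have := hX.2 a (b σ₁) (b σ₂) (b ((σ₁ + σ₂) / 2)) d1 d2
    have e : dist (b σ₁) (b σ₂) ^ 2 = (σ₁ - σ₂) ^ 2 := by
      rw [ray_dist hb h1 h2, sq_abs]
    rw [e] at this
    exact this
  have hstep : ∀ n : ℕ, ∀ σ : ℝ, 0 ≤ σ →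
      dist a (π a) ^ 2 + (1 - (1/2) ^ n) * (σ - u) ^ 2 ≤ dist a (b σ) ^ 2 := by
    intro n
    induction n with
    | zero =>
      intro σ hσ
      simp only [pow_zero, sub_self, zero_mul, add_zero]
      have h := hmin σ hσ
      nlinarith [dist_nonneg (x := a) (y := π a)]
    | succ n ih =>
      intro σ hσ
      have hm : 0 ≤ (u + σ) / 2 := by linarith
      have hcn := hCNmid u σ hu0 hσ
      have hih := ih ((u + σ) / 2) hm
      have habu : dist a (b u) = dist a (π a) := by rw [← hπa]
      rw [habu] at hcn
      have e1 : ((u + σ) / 2 - u) ^ 2 = (σ - u) ^ 2 / 4 := by ring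
      rw [e1] at hih
      have e2 : (u - σ) ^ 2 = (σ - u) ^ 2 := by ring
      rw [e2] at hcn
      have e3 : ((1:ℝ)/2) ^ (n+1) = (1/2 : ℝ)^n * (1/2) := pow_succ _ _
      rw [e3]
      linarith [hcn, hih]
  have hZ0 : 0 ≤ (s - u) ^ 2 := sq_nonneg _
  rcases eq_or_lt_of_le hZ0 with hZ | hZ
  · have h := hstep 0 s hs
    simp only [pow_zero, sub_self, zero_mul, add_zero] at h
    rw [← hZ]
    linarith
  · refine le_of_forall_pos_le_add ?_
    intro ε hε
    obtain ⟨n, hn⟩ := exists_pow_lt_of_lt_one (div_pos hε hZ) (by norm_num : (1:ℝ)/2 < 1)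
    have h := hstep n s hs
    have : (1/2 : ℝ) ^ n * (s - u) ^ 2 < ε := by
      rw [← lt_div_iff₀ hZ]; exact hn
    nlinarith [h]

/-- Points on the segment from `x` down to its projection are "vertically above"
`π x`: their distance to any ray point `b s` is at least `|s - ‖π x‖|`. -/
lemma vertical_dist (hX : IsCAT0 X) {o : X} {b : ℝ → X} (hb : IsGeodesicRay b)
    (hb0 : b 0 = o) {π : X → X} (hπ : IsProj b π) {x q : X} (hq : q ∈ seg x (π x))
    {s : ℝ} (hs : 0 ≤ s) : |s - dist o (π x)| ≤ dist q (b s) := by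
  obtain ⟨hπx, hu0⟩ := proj_eq hb hb0 hπ x
  set u := dist o (π x) with hu
  have hseg : dist x q + dist q (π x) = dist x (π x) := hq
  have h1 : dist q (π x) = infDist q (rayIm b) := by
    have hle : infDist q (rayIm b) ≤ dist q (π x) :=
      Metric.infDist_le_dist_of_mem (hπ x).1
    have hge : dist q (π x) ≤ infDist q (rayIm b) := by
      have := Metric.infDist_le_infDist_add_dist (x := x) (y := q) (s := rayIm b)
      have hx : infDist x (rayIm b) = dist x (π x) := ((hπ x).2).symm
      rw [hx] at this
      rw [dist_comm x q] at this
      have hcomm : dist q x = dist x q := dist_comm q x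
      linarith [hseg]
    linarith
  have h2 : dist q (π q) = dist q (π x) := by
    rw [(hπ q).2, h1]
  -- projections agree
  have h3 : dist o (π q) = u := by
    have hp := pyth hX hb hb0 hπ q hu0
    have hqu : dist q (b u) = dist q (π x) := by rw [← hπx]
    rw [hqu, h2] at hp
    have : (u - dist o (π q)) ^ 2 ≤ 0 := by nlinarith [hp]
    have h4 : (u - dist o (π q)) ^ 2 = 0 := le_antisymm this (sq_nonneg _)
    have := pow_eq_zero_iff (two_ne_zero) |>.mp h4
    linarith [this]
  have hp := pyth hX hb hb0 hπ q hs
  rw [h3] at hp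
  have hd0 : 0 ≤ dist q (b s) := dist_nonneg
  rw [abs_le]
  constructor <;> nlinarith [hp, sq_nonneg (dist q (π q))]

end Helpers5
section Imp21

variable {X : Type*} [MetricSpace X]

/-- variant of transitivity: if `p ∈ [x,y]` and `q ∈ [p,y]` then `q ∈ [x,y]`. -/
lemma seg_trans' {x y p q : X} (hp : p ∈ seg x y) (hq : q ∈ seg p y) : q ∈ seg x y := by
  simp only [seg, Set.mem_setOf_eq] at *
  have t1 : dist x q ≤ dist x p + dist p q := dist_triangle x p q
  have t2 : dist x y ≤ dist x q + dist q y := dist_triangle x q y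
  linarith

lemma ratio_eq {a b : ℝ} (h0 : 0 ≤ a) (hab : a ≤ b) : a = a / b * b := by
  rcases eq_or_ne b 0 with hb | hb
  · simp [hb]; linarith
  · rw [div_mul_cancel₀ _ hb]

/-- subadditivity of a concave function with `κ 0 ≥ 0`. -/
lemma kappa_subadd {κ : ℝ → ℝ} (hκ : IsSublinearFn κ) {a b : ℝ} (ha : 0 ≤ a) (hb : 0 ≤ b) :
    κ (a + b) ≤ κ a + κ b := by
  rcases eq_or_lt_of_le (by linarith : (0:ℝ) ≤ a + b) with hs | hs
  · have ha0 : a = 0 := by linarith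
    have hb0 : b = 0 := by linarith
    subst ha0; subst hb0
    simp only [add_zero]
    linarith [hκ.one_le 0]
  · have h0 : (0:ℝ) ∈ Set.Ici (0:ℝ) := Set.mem_Ici.mpr (le_refl 0)
    have hsmem : (a + b) ∈ Set.Ici (0:ℝ) := Set.mem_Ici.mpr (le_of_lt hs)
    have hane : a + b ≠ 0 := ne_of_gt hs
    have hka : (b / (a+b)) * κ 0 + (a / (a+b)) * κ (a+b) ≤ κ a := by
      have h := hκ.concave.2 h0 hsmem (by positivity : (0:ℝ) ≤ b / (a+b))
        (by positivity : (0:ℝ) ≤ a / (a+b)) (by rw [← add_div, add_comm b a, div_self hane])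
      simp only [smul_eq_mul, mul_zero, zero_add] at h
      rw [show a/(a+b)*(a+b) = a by field_simp] at h
      exact h
    have hkb : (a / (a+b)) * κ 0 + (b / (a+b)) * κ (a+b) ≤ κ b := by
      have h := hκ.concave.2 h0 hsmem (by positivity : (0:ℝ) ≤ a / (a+b))
        (by positivity : (0:ℝ) ≤ b / (a+b)) (by rw [← add_div, div_self hane])
      simp only [smul_eq_mul, mul_zero, zero_add] at h
      rw [show b/(a+b)*(a+b) = b by field_simp] at h
      exact h
    have hκ0 : 0 ≤ κ 0 := le_trans zero_le_one (hκ.one_le 0)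
    have hsum : (a / (a+b)) * κ (a+b) + (b / (a+b)) * κ (a+b) = κ (a+b) := by
      rw [← add_mul]
      rw [show a/(a+b) + b/(a+b) = 1 by field_simp]
      ring
    nlinarith [mul_nonneg (by positivity : (0:ℝ) ≤ b / (a+b)) hκ0,
      mul_nonneg (by positivity : (0:ℝ) ≤ a / (a+b)) hκ0]

/-- sublinearity threshold: beyond some `Z₀ ≥ 1`, `κ z ≤ z / W`. -/
lemma kappa_threshold {κ : ℝ → ℝ} (hκ : IsSublinearFn κ) {W : ℝ} (hW : 0 < W) :
    ∃ Z₀ : ℝ, 1 ≤ Z₀ ∧ ∀ z ≥ Z₀, κ z ≤ z / W := by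
  have h := hκ.sublinear
  have hev : ∀ᶠ z in Filter.atTop, κ z / z < 1 / W := by
    apply h.eventually_lt_const
    positivity
  obtain ⟨Z₁, hZ₁⟩ := Filter.eventually_atTop.mp hev
  refine ⟨max Z₁ 1, le_max_right _ _, fun z hz => ?_⟩
  have hz1 : (1:ℝ) ≤ z := le_trans (le_max_right _ _) hz
  have hz0 : 0 < z := by linarith
  have := hZ₁ z (le_trans (le_max_left _ _) hz)
  rw [div_lt_div_iff₀ hz0 hW] at this
  rw [le_div_iff₀ hW]
  linarith

end Imp21
section Implications

variable {X : Type*} [MetricSpace X]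

lemma slim1_to_slim2 {o : X} {κ : ℝ → ℝ} {b : ℝ → X} {π : X → X} (hπ : IsProj b π)
    (h : SlimCond1 κ o b π) : SlimCond2 κ o b π := by
  obtain ⟨c, hc, H⟩ := h
  exact ⟨c, hc, fun x y hy => ⟨π x, ⟨(hπ x).1, left_mem_seg _ _⟩, H x y hy⟩⟩

lemma slim3_to_slim4 {o : X} {κ : ℝ → ℝ} (hκ : IsSublinearFn κ) {b : ℝ → X} {π : X → X}
    (h : SlimCond3 κ o b π) : SlimCond4 κ o b π := by
  obtain ⟨c, hc, H⟩ := h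
  refine ⟨c, hc, fun x y z hsub hy hz w hw => ?_⟩
  exact le_trans (H x y z hsub w hw) (mul_le_mul_of_nonneg_left (hκ.mono hz) hc)

end Implications
section Imp13

variable {X : Type*} [MetricSpace X]

/-- ordered version of the 1 ⇒ 3 step -/
lemma slim1_to_slim3_key (hX : IsCAT0 X) {o : X} {κ : ℝ → ℝ} (hκ : IsSublinearFn κ)
    {b : ℝ → X} (hb : IsGeodesicRay b) (hb0 : b 0 = o) {π : X → X} (hπ : IsProj b π)
    {c : ℝ} (hc : 0 ≤ c)
    (H : ∀ x : X, ∀ y ∈ rayIm b, infDist (π x) (seg x y) ≤ c * κ (dist o (π x)))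
    (x y z : X) (hsub : seg y z ⊆ rayIm b) (hyz : dist o y ≤ dist o z) :
    ∀ w ∈ seg y z, infDist w (seg y x ∪ seg x z) ≤ c * κ (dist o (π x)) := by
  intro w hw
  obtain ⟨hy_eq, hs0⟩ := rayIm_eq hb hb0 (hsub (left_mem_seg y z))
  obtain ⟨hz_eq, ht0⟩ := rayIm_eq hb hb0 (hsub (right_mem_seg y z))
  obtain ⟨hw_eq, hr0⟩ := rayIm_eq hb hb0 (hsub hw)
  obtain ⟨hπx, hu0⟩ := proj_eq hb hb0 hπ x
  set s := dist o y with hs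
  set t := dist o z with ht
  set r := dist o w with hr
  set u := dist o (π x) with hu
  have hck : 0 ≤ c * κ u := mul_nonneg hc (le_trans zero_le_one (hκ.one_le u))
  have hwmem : b r ∈ seg (b s) (b t) := by rw [← hy_eq, ← hz_eq, ← hw_eq]; exact hw
  have hsr : s ≤ r ∧ r ≤ t := by
    rcases ray_seg_param hb hb0 hs0 ht0 hr0 hwmem with h' | h'
    · exact h'
    · exact ⟨by linarith [h'.1, h'.2], by linarith [h'.1, h'.2]⟩
  refine le_of_forall_pos_le_add (fun ε hε => ?_)
  rcases le_or_gt r u with hru | hru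
  · -- use the side [y, x]
    by_cases hrs : r = s
    · have hwy : w = y := by
        rw [hw_eq, hy_eq, hrs]
      have : infDist w (seg y x ∪ seg x z) ≤ dist w y :=
        Metric.infDist_le_dist_of_mem (Set.mem_union_left _ (left_mem_seg y x))
      rw [hwy] at this ⊢
      simp only [dist_self] at this
      linarith
    · have hsr' : s < r := lt_of_le_of_ne hsr.1 (fun h => hrs h.symm)
      have hsu : s < u := lt_of_lt_of_le hsr' hru
      set θ := (r - s) / (u - s) with hθ
      have hθ0 : 0 ≤ θ := by
        apply div_nonneg <;> linarith
      have hθ1 : θ ≤ 1 := by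
        rw [div_le_one (by linarith)]; linarith
      have h1 : infDist (π x) (seg x y) ≤ c * κ u := H x y (hsub (left_mem_seg y z))
      obtain ⟨p, hp, hdp⟩ := (Metric.infDist_lt_iff (seg_nonempty x y)).mp
        (lt_of_le_of_lt h1 (by linarith : c * κ u < c * κ u + ε))
      have hyw : dist y w = r - s := by
        rw [hy_eq, hw_eq, ray_dist hb hs0 hr0, abs_of_nonpos (by linarith)]; ring
      have hybu : dist y (b u) = u - s := by
        rw [hy_eq, ray_dist hb hs0 hu0, abs_of_nonpos (by linarith)]; ring
      have hwseg : w ∈ seg y (b u) := by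
        rw [hy_eq, hw_eq]; exact ray_seg_mem hb hs0 hu0 hsr.1 hru
      obtain ⟨q', hq'seg, hq'd, _⟩ := exists_seg_point hX.1 y p (r := θ * dist y p)
        (mul_nonneg hθ0 dist_nonneg) (by nlinarith [dist_nonneg (x := y) (y := p)])
      have hne : u - s ≠ 0 := ne_of_gt (by linarith)
      have hconv := conv_interp hX hθ0 hθ1 hwseg hq'seg
        (by rw [hyw, hybu, hθ]; exact (div_mul_cancel₀ _ hne).symm) hq'd
      have hq'mem : q' ∈ seg y x := by
        have hp' : p ∈ seg y x := by rw [seg_comm]; exact hp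
        exact seg_trans hp' hq'seg
      have hbu : dist (b u) p < c * κ u + ε := by
        rw [← hπx]; exact hdp
      calc infDist w (seg y x ∪ seg x z) ≤ dist w q' :=
            Metric.infDist_le_dist_of_mem (Set.mem_union_left _ hq'mem)
        _ ≤ θ * dist (b u) p := hconv
        _ ≤ c * κ u + ε := by nlinarith [dist_nonneg (x := b u) (y := p)]
  · -- use the side [x, z]
    have hrt : r ≤ t := hsr.2
    have hut : u < t := lt_of_lt_of_le hru hrt
    set θ := (t - r) / (t - u) with hθ
    have hθ0 : 0 ≤ θ := by apply div_nonneg <;> linarith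
    have hθ1 : θ ≤ 1 := by rw [div_le_one (by linarith)]; linarith
    have h1 : infDist (π x) (seg x z) ≤ c * κ u := H x z (hsub (right_mem_seg y z))
    obtain ⟨p, hp, hdp⟩ := (Metric.infDist_lt_iff (seg_nonempty x z)).mp
      (lt_of_le_of_lt h1 (by linarith : c * κ u < c * κ u + ε))
    have hzw : dist z w = t - r := by
      rw [hz_eq, hw_eq, ray_dist hb ht0 hr0, abs_of_nonneg (by linarith)]
    have hzbu : dist z (b u) = t - u := by
      rw [hz_eq, ray_dist hb ht0 hu0, abs_of_nonneg (by linarith)]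
    have hwseg : w ∈ seg z (b u) := by
      rw [hz_eq, hw_eq, seg_comm]
      exact ray_seg_mem hb hu0 ht0 (le_of_lt hru) hrt
    obtain ⟨q', hq'seg, hq'd, _⟩ := exists_seg_point hX.1 z p (r := θ * dist z p)
      (mul_nonneg hθ0 dist_nonneg) (by nlinarith [dist_nonneg (x := z) (y := p)])
    have hne : t - u ≠ 0 := ne_of_gt (by linarith)
    have hconv := conv_interp hX hθ0 hθ1 hwseg hq'seg
      (by rw [hzw, hzbu, hθ]; exact (div_mul_cancel₀ _ hne).symm) hq'd
    have hq'mem : q' ∈ seg x z := by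
      have hp' : p ∈ seg z x := by rw [seg_comm]; exact hp
      rw [seg_comm]
      exact seg_trans hp' hq'seg
    have hbu : dist (b u) p < c * κ u + ε := by
      rw [← hπx]; exact hdp
    calc infDist w (seg y x ∪ seg x z) ≤ dist w q' :=
          Metric.infDist_le_dist_of_mem (Set.mem_union_right _ hq'mem)
      _ ≤ θ * dist (b u) p := hconv
      _ ≤ c * κ u + ε := by nlinarith [dist_nonneg (x := b u) (y := p)]

lemma slim1_to_slim3 (hX : IsCAT0 X) {o : X} {κ : ℝ → ℝ} (hκ : IsSublinearFn κ)
    {b : ℝ → X} (hb : IsGeodesicRay b) (hb0 : b 0 = o) {π : X → X} (hπ : IsProj b π)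
    (h : SlimCond1 κ o b π) : SlimCond3 κ o b π := by
  obtain ⟨c, hc, H⟩ := h
  refine ⟨c, hc, fun x y z hsub w hw => ?_⟩
  rcases le_total (dist o y) (dist o z) with hyz | hzy
  · exact slim1_to_slim3_key hX hκ hb hb0 hπ hc H x y z hsub hyz w hw
  · have hsub' : seg z y ⊆ rayIm b := by rw [seg_comm]; exact hsub
    have hw' : w ∈ seg z y := by rw [seg_comm]; exact hw
    have := slim1_to_slim3_key hX hκ hb hb0 hπ hc H x z y hsub' hzy w hw'
    have he : seg z x ∪ seg x y = seg y x ∪ seg x z := by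
      rw [seg_comm z x, seg_comm x y, Set.union_comm, seg_comm x z, seg_comm y x]
    rw [he] at this
    exact this

end Imp13
section Imp42

variable {X : Type*} [MetricSpace X]

lemma slim4_to_slim2 (hX : IsCAT0 X) {o : X} {κ : ℝ → ℝ} (hκ : IsSublinearFn κ)
    {b : ℝ → X} (hb : IsGeodesicRay b) (hb0 : b 0 = o) {π : X → X} (hπ : IsProj b π)
    (h : SlimCond4 κ o b π) : SlimCond2 κ o b π := by
  obtain ⟨c0, hc0, H0⟩ := h
  set c := c0 + 1 with hcdef
  have hc1 : (1:ℝ) ≤ c := by linarith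
  have H : ∀ x y z : X, seg y z ⊆ rayIm b →
      dist o y ≤ dist o (π x) → dist o (π x) ≤ dist o z →
      ∀ w ∈ seg y z, infDist w (seg y x ∪ seg x z) ≤ c * κ (dist o z) := by
    intro x y z hsub hy hz w hw
    refine le_trans (H0 x y z hsub hy hz w hw) ?_
    have h1 : (1:ℝ) ≤ κ (dist o z) := hκ.one_le _
    nlinarith
  refine ⟨4 * c, by linarith, fun x y hy => ?_⟩
  obtain ⟨hy_eq, ht0⟩ := rayIm_eq hb hb0 hy
  obtain ⟨hπx, hu0⟩ := proj_eq hb hb0 hπ x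
  set t := dist o y with htdef
  set u := dist o (π x) with hudef
  have hπray : π x ∈ rayIm b := (hπ x).1
  rcases le_total u t with hut | htu
  · -- t ≥ u, take z := y
    refine ⟨y, ⟨hy, right_mem_seg _ _⟩, ?_⟩
    have hκt : (1:ℝ) ≤ κ t := hκ.one_le t
    have hck : 0 < c * κ t := by nlinarith
    have hdy : dist (π x) y = t - u := by
      rw [hπx, hy_eq, ray_dist hb hu0 ht0, abs_of_nonpos (by linarith)]; ring
    by_cases hshort : t - u ≤ 2 * (c * κ t)
    · calc infDist (π x) (seg x y) ≤ dist (π x) y :=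
            Metric.infDist_le_dist_of_mem (right_mem_seg x y)
        _ ≤ 4 * c * κ t := by rw [hdy]; nlinarith
    · set v := u + 2 * (c * κ t) with hvdef
      have hv1 : u ≤ v := by nlinarith
      have hv2 : v ≤ t := by linarith [not_le.mp hshort]
      have hv0 : 0 ≤ v := le_trans hu0 hv1
      have hwmem : b v ∈ seg (π x) y := by
        rw [hπx, hy_eq]; exact ray_seg_mem hb hu0 ht0 hv1 hv2
      have hsub : seg (π x) y ⊆ rayIm b := by
        intro p hp
        rw [hπx, hy_eq] at hp
        have hpe := ray_seg_sub hX hb hu0 hut hp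
        rw [hpe]
        exact mem_rayIm (by linarith [dist_nonneg (x := b u) (y := p)])
      have h4 := H x (π x) y hsub (le_refl u) (by rw [← htdef]; exact hut) (b v) hwmem
      rw [← htdef] at h4
      have hne : (seg (π x) x ∪ seg x y).Nonempty :=
        ⟨x, Set.mem_union_right _ (left_mem_seg x y)⟩
      obtain ⟨p, hp, hdp⟩ := (Metric.infDist_lt_iff hne).mp
        (lt_of_le_of_lt h4 (by nlinarith : c * κ t < c * κ t + c * κ t / 2))
      rcases hp with hp | hp
      · exfalso
        have hp' : p ∈ seg x (π x) := by rw [seg_comm]; exact hp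
        have := vertical_dist hX hb hb0 hπ hp' hv0
        rw [← hudef] at this
        have he : |v - u| = 2 * (c * κ t) := by
          rw [abs_of_nonneg (by linarith)]; rw [hvdef]; ring
        rw [he] at this
        rw [dist_comm (b v) p] at hdp
        nlinarith
      · have hdv : dist (π x) (b v) = 2 * (c * κ t) := by
          rw [hπx, ray_dist hb hu0 hv0, abs_of_nonpos (by linarith)]
          rw [hvdef]; ring
        calc infDist (π x) (seg x y) ≤ dist (π x) p :=
              Metric.infDist_le_dist_of_mem hp
          _ ≤ dist (π x) (b v) + dist (b v) p := dist_triangle _ _ _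
          _ ≤ 4 * c * κ t := by rw [hdv]; nlinarith
  · -- t ≤ u, take z := π x
    refine ⟨π x, ⟨hπray, left_mem_seg _ _⟩, ?_⟩
    have hκu : (1:ℝ) ≤ κ u := hκ.one_le u
    have hck : 0 < c * κ u := by nlinarith
    have hdy : dist (π x) y = u - t := by
      rw [hπx, hy_eq, ray_dist hb hu0 ht0, abs_of_nonneg (by linarith)]
    by_cases hshort : u - t ≤ 2 * (c * κ u)
    · calc infDist (π x) (seg x y) ≤ dist (π x) y :=
            Metric.infDist_le_dist_of_mem (right_mem_seg x y)
        _ ≤ 4 * c * κ u := by rw [hdy]; nlinarith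
    · set v := u - 2 * (c * κ u) with hvdef
      have hv1 : t ≤ v := by linarith [not_le.mp hshort]
      have hv2 : v ≤ u := by nlinarith
      have hv0 : 0 ≤ v := le_trans ht0 hv1
      have hwmem : b v ∈ seg y (π x) := by
        rw [hπx, hy_eq]; exact ray_seg_mem hb ht0 hu0 hv1 hv2
      have hsub : seg y (π x) ⊆ rayIm b := by
        intro p hp
        rw [hπx, hy_eq] at hp
        have hpe := ray_seg_sub hX hb ht0 htu hp
        rw [hpe]
        exact mem_rayIm (by linarith [dist_nonneg (x := b t) (y := p)])
      have h4 := H x y (π x) hsub (by rw [← htdef]; exact htu) (le_refl u) (b v) hwmem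
      rw [← hudef] at h4
      have hne : (seg y x ∪ seg x (π x)).Nonempty :=
        ⟨x, Set.mem_union_left _ (right_mem_seg y x)⟩
      obtain ⟨p, hp, hdp⟩ := (Metric.infDist_lt_iff hne).mp
        (lt_of_le_of_lt h4 (by nlinarith : c * κ u < c * κ u + c * κ u / 2))
      rcases hp with hp | hp
      · have hp' : p ∈ seg x y := by rw [seg_comm]; exact hp
        have hdv : dist (π x) (b v) = 2 * (c * κ u) := by
          rw [hπx, ray_dist hb hu0 hv0, abs_of_nonneg (by nlinarith)]
          rw [hvdef]; ring
        calc infDist (π x) (seg x y) ≤ dist (π x) p :=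
              Metric.infDist_le_dist_of_mem hp'
          _ ≤ dist (π x) (b v) + dist (b v) p := dist_triangle _ _ _
          _ ≤ 4 * c * κ u := by rw [hdv]; nlinarith
      · exfalso
        have := vertical_dist hX hb hb0 hπ hp hv0
        rw [← hudef] at this
        have he : |v - u| = 2 * (c * κ u) := by
          rw [abs_of_nonpos (by nlinarith)]; rw [hvdef]; ring
        rw [he] at this
        rw [dist_comm (b v) p] at hdp
        nlinarith

end Imp42
section Imp21b

variable {X : Type*} [MetricSpace X]

set_option maxHeartbeats 2000000 in
lemma slim2_to_slim1 (hX : IsCAT0 X) {o : X} {κ : ℝ → ℝ}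
    (hκ : IsSublinearFn κ) {b : ℝ → X} (hb : IsGeodesicRay b) (hb0 : b 0 = o)
    {π : X → X} (hπ : IsProj b π) (h : SlimCond2 κ o b π) : SlimCond1 κ o b π := by
  obtain ⟨c₀, hc₀, H2⟩ := h
  have hc₀0 : (0:ℝ) ≤ c₀ := hc₀
  obtain ⟨c, hc_def⟩ : ∃ r : ℝ, r = c₀ + 1 := ⟨_, rfl⟩
  have hc1 : (1:ℝ) ≤ c := by rw [hc_def]; linarith
  have hc0 : (0:ℝ) ≤ c := by linarith
  -- the weak slimness estimate W
  have W : ∀ a : X, ∀ s : ℝ, 0 ≤ s →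
      infDist (π a) (seg a (b s)) ≤ c * κ (max (dist o (π a)) s) := by
    intro a s hs
    obtain ⟨z, ⟨hzray, hzseg⟩, hzb⟩ := H2 a (b s) (mem_rayIm hs)
    obtain ⟨hz_eq, hz0⟩ := rayIm_eq hb hb0 hzray
    obtain ⟨hπa, hua⟩ := proj_eq hb hb0 hπ a
    rw [hπa] at hzseg
    rw [hz_eq] at hzseg
    have hpar := ray_seg_param hb hb0 hua hs hz0 hzseg
    have hzmax : dist o z ≤ max (dist o (π a)) s := by
      rcases hpar with ⟨h1, h2⟩ | ⟨h1, h2⟩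
      · exact le_trans h2 (le_max_right _ _)
      · exact le_trans h2 (le_max_left _ _)
    have hm := hκ.mono hzmax
    have h1 := hκ.one_le (dist o z)
    have hprod : 0 ≤ c₀ * (κ (max (dist o (π a)) s) - κ (dist o z)) :=
      mul_nonneg hc₀0 (sub_nonneg.mpr hm)
    calc infDist (π a) (seg a (b s)) ≤ c₀ * κ (dist o z) := hzb
      _ ≤ c * κ (max (dist o (π a)) s) := by
          rw [hc_def]
          nlinarith only [hprod, h1, hm]
  obtain ⟨Z₀, hZ₀1, hZ₀⟩ := kappa_threshold hκ (by linarith : (0:ℝ) < 264 * c)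
  have hκ22 : (1:ℝ) ≤ κ 22 := hκ.one_le 22
  have hcκ22 : (0:ℝ) ≤ 12*c*κ 22 :=
    mul_nonneg (mul_nonneg (by norm_num) hc0) (by linarith)
  refine ⟨Z₀ + 12*c + 12*c*κ 22 + 12, by linarith, ?_⟩
  have main : ∀ x : X, ∀ t : ℝ, 0 ≤ t →
      infDist (π x) (seg x (b t)) ≤ (Z₀ + 12*c + 12*c*κ 22 + 12) * κ (dist o (π x)) := by
    intro x t ht
    obtain ⟨hπx0, hu0'⟩ := proj_eq hb hb0 hπ x
    obtain ⟨u, hu_def⟩ : ∃ r : ℝ, r = dist o (π x) := ⟨_, rfl⟩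
    have hπx : π x = b u := by rw [hu_def]; exact hπx0
    have hu0 : 0 ≤ u := by rw [hu_def]; exact hu0'
    obtain ⟨D, hD_def⟩ : ∃ r : ℝ, r = infDist (π x) (seg x (b t)) := ⟨_, rfl⟩
    have hD0 : 0 ≤ D := by rw [hD_def]; exact Metric.infDist_nonneg
    have hκu : (1:ℝ) ≤ κ u := hκ.one_le u
    have hκbig : (1:ℝ) ≤ κ (u + 22*D + 22) := hκ.one_le _
    have hκbig0 : (0:ℝ) ≤ κ (u + 22*D + 22) := by linarith
    have hcκbig : (0:ℝ) ≤ c * κ (u + 22*D + 22) := mul_nonneg hc0 hκbig0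
    rw [← hD_def, ← hu_def]
    have master : D ≤ 6 * c * κ (u + 22*D + 22) + 6 := by
      rcases le_or_gt t u with htu | hut
      · -- easy case : target below the projection
        have hW4 := W x t ht
        rw [← hu_def, max_eq_left htu, ← hD_def] at hW4
        have hb1 : c * κ u ≤ c * κ (u + 22*D + 22) :=
          mul_le_mul_of_nonneg_left (hκ.mono (by linarith)) hc0
        linarith only [hW4, hb1, hcκbig]
      rcases lt_or_ge D 1 with hDlt1 | hD1
      · linarith only [hDlt1, hcκbig]
      -- main case
      have hne : (seg x (b t)).Nonempty := seg_nonempty _ _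
      have hlt : infDist (π x) (seg x (b t)) < D + 1/2 := by
        rw [← hD_def]; linarith
      obtain ⟨qs, hqs, hdqs⟩ := (Metric.infDist_lt_iff hne).mp hlt
      obtain ⟨hπq0, hv0'⟩ := proj_eq hb hb0 hπ qs
      obtain ⟨v, hv_def⟩ : ∃ r : ℝ, r = dist o (π qs) := ⟨_, rfl⟩
      have hπq : π qs = b v := by rw [hv_def]; exact hπq0
      have hv0 : 0 ≤ v := by rw [hv_def]; exact hv0'
      have hqbu : dist qs (b u) < D + 1/2 := by
        rw [← hπx, dist_comm]; exact hdqs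
      have hpy := pyth hX hb hb0 hπ qs hu0
      rw [← hv_def] at hpy
      rw [hπq] at hpy
      obtain ⟨A, hA_def⟩ : ∃ r : ℝ, r = dist qs (b v) := ⟨_, rfl⟩
      rw [← hA_def] at hpy
      have hA0 : 0 ≤ A := by rw [hA_def]; exact dist_nonneg
      obtain ⟨g, hg_def2⟩ : ∃ r : ℝ, r = dist (b u) (b v) := ⟨_, rfl⟩
      have hgabs : g = |u - v| := by rw [hg_def2]; exact ray_dist hb hu0 hv0
      have hg2 : g^2 = (u - v)^2 := by rw [hgabs, sq_abs]
      have hpy2 : A^2 + g^2 ≤ dist qs (b u)^2 := by rw [hg2]; exact hpy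
      have hqbu0 : (0:ℝ) ≤ dist qs (b u) := dist_nonneg
      have hg0 : (0:ℝ) ≤ g := by rw [hg_def2]; exact dist_nonneg
      have hA_le : A ≤ D + 1/2 := by
        nlinarith only [hpy2, hqbu, hqbu0, hA0, hg0, hD0, sq_nonneg g]
      have hg_le : g ≤ D + 1/2 := by
        nlinarith only [hpy2, hqbu, hqbu0, hA0, hg0, hD0, sq_nonneg A]
      have huv : u ≤ v + g := by
        have h1 : u - v ≤ |u - v| := le_abs_self _
        rw [hgabs]; linarith
      have hvu : v ≤ u + g := by
        have h1 : v - u ≤ |u - v| := by rw [abs_sub_comm]; exact le_abs_self _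
        rw [hgabs]; linarith
      have hv_le : v ≤ u + D + 1/2 := by linarith
      have hκmaxuv : κ (max u v) ≤ κ (u + 22*D + 22) :=
        hκ.mono (max_le (by linarith) (by linarith))
      have hcmax : c * κ (max u v) ≤ c * κ (u + 22*D + 22) :=
        mul_le_mul_of_nonneg_left hκmaxuv hc0
      -- (✸) : the corner is L-shaped
      have hW1 := W qs u hu0
      rw [← hv_def] at hW1
      rw [hπq, max_comm v u] at hW1
      obtain ⟨pt, hpt, hdpt⟩ := (Metric.infDist_lt_iff (seg_nonempty qs (b u))).mp
        (lt_of_le_of_lt hW1 (by linarith : c * κ (max u v) < c * κ (max u v) + 1/2))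
      have hpt_eq : dist qs pt + dist pt (b u) = dist qs (b u) := hpt
      have htri1 : A ≤ dist qs pt + dist pt (b v) := by
        rw [hA_def]; exact dist_triangle qs pt (b v)
      have htri2 : g ≤ dist (b u) pt + dist pt (b v) := by
        rw [hg_def2]
        exact dist_triangle _ _ _
      have hcomm1 : dist pt (b v) = dist (b v) pt := dist_comm _ _
      have hcomm2 : dist (b u) pt = dist pt (b u) := dist_comm _ _
      have hstar : A + g ≤ (D + 1/2) + 2*(c * κ (max u v) + 1/2) := by
        linarith only [hpt_eq, htri1, htri2, hcomm1, hcomm2, hdpt, hqbu]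
      -- (✪) : the geodesic tracks the vertical down to the corner position
      have hW2 := W x v hv0
      rw [← hu_def] at hW2
      rw [hπx] at hW2
      obtain ⟨ph, hph, hdph⟩ := (Metric.infDist_lt_iff (seg_nonempty x (b v))).mp
        (lt_of_le_of_lt hW2 (by linarith : c * κ (max u v) < c * κ (max u v) + 1/2))
      have hple : dist x ph ≤ dist x (b v) := seg_dist_le hph
      obtain ⟨θ, hθ_def⟩ : ∃ r : ℝ, r = dist x ph / dist x (b v) := ⟨_, rfl⟩
      have hθ0 : 0 ≤ θ := by rw [hθ_def]; exact div_nonneg dist_nonneg dist_nonneg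
      have hθ1 : θ ≤ 1 := by rw [hθ_def]; exact div_le_one_of_le₀ hple dist_nonneg
      obtain ⟨m, hm, hdm, _⟩ := exists_seg_point hX.1 x qs (r := θ * dist x qs)
        (mul_nonneg hθ0 dist_nonneg)
        (by calc θ * dist x qs ≤ 1 * dist x qs :=
              mul_le_mul_of_nonneg_right hθ1 dist_nonneg
            _ = dist x qs := one_mul _)
      have hdp' : dist x ph = θ * dist x (b v) := by
        rw [hθ_def]; exact ratio_eq dist_nonneg hple
      have hconv := conv_interp hX hθ0 hθ1 hph hm hdp' hdm
      have hbvqs : dist (b v) qs = A := by rw [dist_comm, ← hA_def]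
      have hm_mem : m ∈ seg x (b t) := seg_trans hqs hm
      have hDm : D ≤ dist (b u) m := by
        have h1 : infDist (π x) (seg x (b t)) ≤ dist (π x) m :=
          Metric.infDist_le_dist_of_mem hm_mem
        rw [← hD_def, hπx] at h1; exact h1
      have hstar2 : D ≤ (c * κ (max u v) + 1/2) + A := by
        have h2 := dist_triangle (b u) ph m
        rw [hbvqs] at hconv
        have h4 : θ * A ≤ 1 * A := mul_le_mul_of_nonneg_right hθ1 hA0
        rw [one_mul] at h4
        linarith only [hDm, h2, hconv, h4, hdph]
      -- (✪✪✪) : offset bound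
      have hg3 : g ≤ 3*(c * κ (max u v)) + 2 := by linarith only [hstar, hstar2]
      rcases lt_or_ge D (c * κ (max u v)) with hDd | hdD
      · linarith only [hDd, hcmax, hcκbig]
      -- forward one-shot
      obtain ⟨M, hM_def⟩ : ∃ r : ℝ, r = max A D := ⟨_, rfl⟩
      have hDM : D ≤ M := by rw [hM_def]; exact le_max_right _ _
      have hAM : A ≤ M := by rw [hM_def]; exact le_max_left _ _
      have hM1 : (1:ℝ) ≤ M := le_trans hD1 hDM
      have hMle : M ≤ D + 1/2 := by rw [hM_def]; exact max_le hA_le (by linarith)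
      obtain ⟨T, hT_def⟩ : ∃ r : ℝ, r = v + 21 * M := ⟨_, rfl⟩
      have hT0 : (0:ℝ) ≤ T := by rw [hT_def]; linarith
      have hTv : v ≤ T := by rw [hT_def]; linarith
      have hTle : T ≤ u + 22*D + 11 := by
        rw [hT_def]; linarith only [hv_le, hMle, hD0]
      rcases lt_or_ge t T with htT | hTt
      · -- target closer than T : direct
        have hW4 := W x t ht
        rw [← hu_def, max_eq_right (le_of_lt hut), ← hD_def] at hW4
        have hb1 : c * κ t ≤ c * κ (u + 22*D + 22) :=
          mul_le_mul_of_nonneg_left (hκ.mono (by linarith : t ≤ u + 22*D + 22)) hc0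
        linarith only [hW4, hb1, hcκbig]
      have hTu : u ≤ T := by
        rw [hT_def]
        linarith only [huv, hg3, hdD, hDM, hD1, hM1]
      rcases lt_or_ge D (c * κ T) with hDd2 | hd2D
      · have hb1 : c * κ T ≤ c * κ (u + 22*D + 22) :=
          mul_le_mul_of_nonneg_left (hκ.mono (by linarith : T ≤ u + 22*D + 22)) hc0
        linarith only [hDd2, hb1, hcκbig]
      -- fellow-travel point near b T
      have htu0 : (0:ℝ) < t - u := by linarith
      have htu0' : t - u ≠ 0 := ne_of_gt htu0
      obtain ⟨θT, hθT_def⟩ : ∃ r : ℝ, r = (t - T) / (t - u) := ⟨_, rfl⟩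
      have hθT0 : 0 ≤ θT := by rw [hθT_def]; exact div_nonneg (by linarith) (by linarith)
      have hθT1 : θT ≤ 1 := by rw [hθT_def, div_le_one htu0]; linarith
      have hbT : b T ∈ seg (b t) (b u) := by
        rw [seg_comm]; exact ray_seg_mem hb hu0 ht hTu hTt
      obtain ⟨q2, hq2, hdq2, _⟩ := exists_seg_point hX.1 (b t) qs (r := θT * dist (b t) qs)
        (mul_nonneg hθT0 dist_nonneg)
        (by calc θT * dist (b t) qs ≤ 1 * dist (b t) qs :=
              mul_le_mul_of_nonneg_right hθT1 dist_nonneg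
            _ = dist (b t) qs := one_mul _)
      have hdbT : dist (b t) (b T) = θT * dist (b t) (b u) := by
        rw [ray_dist hb ht hT0, ray_dist hb ht hu0,
          abs_of_nonneg (by linarith : (0:ℝ) ≤ t - T),
          abs_of_nonneg (by linarith : (0:ℝ) ≤ t - u), hθT_def]
        exact (div_mul_cancel₀ _ htu0').symm
      have hconvT := conv_interp hX hθT0 hθT1 hbT hq2 hdbT hdq2
      have hgap : dist (b T) q2 ≤ D + 1/2 := by
        have h1 : dist (b u) qs < D + 1/2 := by rw [dist_comm]; exact hqbu
        have h2 : θT * dist (b u) qs ≤ 1 * dist (b u) qs :=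
          mul_le_mul_of_nonneg_right hθT1 dist_nonneg
        rw [one_mul] at h2
        linarith only [hconvT, h1, h2]
      have hq2' : q2 ∈ seg qs (b t) := by rw [seg_comm]; exact hq2
      -- W at the corner, forward target T
      have hW3 := W qs T hT0
      rw [← hv_def] at hW3
      rw [hπq, max_eq_right hTv] at hW3
      obtain ⟨p2, hp2, hdp2⟩ := (Metric.infDist_lt_iff (seg_nonempty qs (b T))).mp
        (lt_of_le_of_lt hW3 (by linarith : c * κ T < c * κ T + 1/2))
      have hp2le : dist qs p2 ≤ dist qs (b T) := seg_dist_le hp2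
      obtain ⟨θ2, hθ2_def⟩ : ∃ r : ℝ, r = dist qs p2 / dist qs (b T) := ⟨_, rfl⟩
      have hθ20 : 0 ≤ θ2 := by rw [hθ2_def]; exact div_nonneg dist_nonneg dist_nonneg
      have hθ21 : θ2 ≤ 1 := by rw [hθ2_def]; exact div_le_one_of_le₀ hp2le dist_nonneg
      obtain ⟨mh, hmh, hdmh, _⟩ := exists_seg_point hX.1 qs q2 (r := θ2 * dist qs q2)
        (mul_nonneg hθ20 dist_nonneg)
        (by calc θ2 * dist qs q2 ≤ 1 * dist qs q2 :=
              mul_le_mul_of_nonneg_right hθ21 dist_nonneg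
            _ = dist qs q2 := one_mul _)
      have hdp2' : dist qs p2 = θ2 * dist qs (b T) := by
        rw [hθ2_def]; exact ratio_eq dist_nonneg hp2le
      have hconv2 := conv_interp hX hθ20 hθ21 hp2 hmh hdp2' hdmh
      have hmhγ : mh ∈ seg x (b t) := seg_trans' hqs (seg_trans hq2' hmh)
      have hvT : dist (b v) (b T) = 21 * M := by
        rw [ray_dist hb hv0 hT0, hT_def,
          show v - (v + 21*M) = -(21*M) by ring, abs_neg,
          abs_of_nonneg (by linarith : (0:ℝ) ≤ 21*M)]
      have hqbT : 20 * M ≤ dist qs (b T) := by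
        have h1 := dist_triangle (b v) qs (b T)
        have h2 : dist (b v) qs = A := by rw [dist_comm, ← hA_def]
        linarith only [h1, h2, hvT, hAM]
      have hqp2 : dist qs p2 ≤ 3 * M := by
        have h1 := dist_triangle qs (b v) p2
        rw [← hA_def] at h1
        linarith only [h1, hdp2, hAM, hd2D, hDM, hM1]
      have hθ2le : θ2 ≤ 3/20 := by
        have h20 : (0:ℝ) < 20 * M := by linarith
        have h1 := div_le_div₀ (by linarith : (0:ℝ) ≤ 3*M) hqp2 h20 hqbT
        have he : 3*M/(20*M) = 3/20 := by
          rw [mul_comm 3 M, mul_comm 20 M, mul_div_mul_left _ _ (by linarith : M ≠ 0)]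
        rw [he] at h1
        rw [hθ2_def]
        exact h1
      have hfin1 : dist p2 mh ≤ (3/20) * (D + 1/2) := by
        have h1 : θ2 * dist (b T) q2 ≤ (3/20) * dist (b T) q2 :=
          mul_le_mul_of_nonneg_right hθ2le dist_nonneg
        have h2 : (3/20) * dist (b T) q2 ≤ (3/20) * (D + 1/2) := by
          linarith only [hgap]
        linarith only [hconv2, h1, h2]
      have hDmh : D ≤ dist (b u) mh := by
        have h1 : infDist (π x) (seg x (b t)) ≤ dist (π x) mh :=
          Metric.infDist_le_dist_of_mem hmhγ
        rw [← hD_def, hπx] at h1; exact h1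
      have htri : dist (b u) mh ≤ g + dist (b v) p2 + dist p2 mh := by
        have h1 := dist_triangle (b u) (b v) mh
        have h2 := dist_triangle (b v) p2 mh
        rw [← hg_def2] at h1
        linarith only [h1, h2]
      have hb2 : c * κ T ≤ c * κ (u + 22*D + 22) :=
        mul_le_mul_of_nonneg_left (hκ.mono (by linarith : T ≤ u + 22*D + 22)) hc0
      linarith only [hDmh, htri, hg3, hdp2, hfin1, hcmax, hb2, hcκbig]
    -- bootstrap
    rcases le_or_gt D Z₀ with hDZ | hDZ
    · have e1 : Z₀ * 1 ≤ Z₀ * κ u := mul_le_mul_of_nonneg_left hκu (by linarith)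
      have e2 : (0:ℝ) ≤ (12*c + 12*c*κ 22 + 12) * κ u :=
        mul_nonneg (by linarith) (by linarith)
      rw [mul_one] at e1
      nlinarith only [hDZ, e1, e2]
    · have hth := hZ₀ (22*D) (by linarith only [hDZ, hD0, hZ₀1])
      have hsub1 : κ (u + 22*D + 22) ≤ κ u + (κ (22*D) + κ 22) := by
        have h1 : κ (u + (22*D + 22)) ≤ κ u + κ (22*D + 22) :=
          kappa_subadd hκ hu0 (by linarith)
        have h2 : κ (22*D + 22) ≤ κ (22*D) + κ 22 :=
          kappa_subadd hκ (by linarith) (by norm_num)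
        have e : u + 22*D + 22 = u + (22*D + 22) := by ring
        rw [e]
        linarith only [h1, h2]
      have hmul : 6*c*κ (22*D) ≤ D / 2 := by
        have hcne : c ≠ 0 := by linarith
        have h1 : 6*c*(22*D/(264*c)) = D / 2 := by
          field_simp
          ring
        have h2 : (6*c)*κ (22*D) ≤ (6*c)*(22*D/(264*c)) :=
          mul_le_mul_of_nonneg_left hth (by linarith)
        linarith only [h1, h2]
      have hscale : 6*c*κ (u + 22*D + 22) ≤ 6*c*(κ u + (κ (22*D) + κ 22)) :=
        mul_le_mul_of_nonneg_left hsub1 (by linarith)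
      have hfin : D ≤ 12*c*κ u + 12*c*κ 22 + 12 := by
        nlinarith only [master, hscale, hmul]
      have e1 : 12*c*κ 22 * 1 ≤ 12*c*κ 22 * κ u := mul_le_mul_of_nonneg_left hκu hcκ22
      have e2 : (0:ℝ) ≤ Z₀ * κ u := mul_nonneg (by linarith) (by linarith)
      have e3 : (12:ℝ) * 1 ≤ 12 * κ u := by linarith
      have e4 : 12*c*1 ≤ 12*c*κ u := mul_le_mul_of_nonneg_left hκu (by linarith)
      rw [mul_one] at e1 e3 e4
      nlinarith only [hfin, e1, e2, e3, e4]
  intro x y hy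
  obtain ⟨hy_eq, hyt⟩ := rayIm_eq hb hb0 hy
  rw [hy_eq]
  exact main x (dist o y) hyt

end Imp21b
/-- Corollary 3.10. The four κ-slim conditions are pairwise
equivalent for a geodesic ray in a proper CAT(0) space. -/
theorem slim_conditions_equivalent
    {X : Type*} [MetricSpace X] [ProperSpace X] (hX : IsCAT0 X)
    (o : X) (κ : ℝ → ℝ) (hκ : IsSublinearFn κ)
    (b : ℝ → X) (hb : IsGeodesicRay b) (hb0 : b 0 = o)
    (π : X → X) (hπ : IsProj b π) :
    (SlimCond1 κ o b π ↔ SlimCond2 κ o b π) ∧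
    (SlimCond2 κ o b π ↔ SlimCond3 κ o b π) ∧
    (SlimCond3 κ o b π ↔ SlimCond4 κ o b π) := by
  have A : SlimCond1 κ o b π → SlimCond2 κ o b π := slim1_to_slim2 hπ
  have B : SlimCond2 κ o b π → SlimCond1 κ o b π := slim2_to_slim1 hX hκ hb hb0 hπ
  have C : SlimCond1 κ o b π → SlimCond3 κ o b π := slim1_to_slim3 hX hκ hb hb0 hπ
  have D : SlimCond3 κ o b π → SlimCond4 κ o b π := slim3_to_slim4 hκ
  have F : SlimCond4 κ o b π → SlimCond2 κ o b π := slim4_to_slim2 hX hκ hb hb0 hπ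
  exact ⟨⟨A, B⟩, ⟨fun h2 => C (B h2), fun h3 => F (D h3)⟩,
    ⟨D, fun h4 => C (B (F h4))⟩⟩
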